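/- Let X, Y be partially ordered complete metric spaces such that: (i) every nondecreasing convergent sequence {xₙ} → x in X satisfies xₙ ≤₁ x for all n; (ii) every nonincreasing convergent sequence {yₙ} → y in Y satisfies yₙ ≥₂ y for all n. Let F : X × Y → X and G : Y × X → Y have the mixed monotone property (no continuity assumed) and suppose there exist k, l ∈ [0,1) with d_X(F(x,y),F(u,v)) ≤ (k/2)[d_X(x,u)+d_Y(y,v)] for x ≥₁ u, y ≤₂ v, and d_Y(G(y,x),G(v,u)) ≤ (l/2)[d_Y(y,v)+d_X(x,u)] for x ≤₁ u, y ≥₂ v. If there exists (x₀,y₀) with x₀ ≤₁ F(x₀,y₀) and y₀ ≥₂ G(y₀,x₀), then F and G have an FG-coupled fixed point. -/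

import Mathlib

theorem stmt_2 {X Y : Type*} [MetricSpace X] [MetricSpace Y]
    [CompleteSpace X] [CompleteSpace Y] [PartialOrder X] [PartialOrder Y]
    (hX : ∀ (s : ℕ → X) (x : X), Monotone s →
      Filter.Tendsto s Filter.atTop (nhds x) → ∀ n, s n ≤ x)
    (hY : ∀ (s : ℕ → Y) (y : Y), Antitone s →
      Filter.Tendsto s Filter.atTop (nhds y) → ∀ n, y ≤ s n)
    (F : X → Y → X) (G : Y → X → Y)
    (hFmono : ∀ y : Y, Monotone fun x => F x y)
    (hFanti : ∀ x : X, Antitone fun y => F x y)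
    (hGanti : ∀ y : Y, Antitone fun x => G y x)
    (hGmono : ∀ x : X, Monotone fun y => G y x)
    (k l : ℝ) (hk0 : 0 ≤ k) (hk1 : k < 1) (hl0 : 0 ≤ l) (hl1 : l < 1)
    (hF : ∀ x u : X, ∀ y v : Y, u ≤ x → y ≤ v →
      dist (F x y) (F u v) ≤ k / 2 * (dist x u + dist y v))
    (hG : ∀ x u : X, ∀ y v : Y, x ≤ u → v ≤ y →
      dist (G y x) (G v u) ≤ l / 2 * (dist y v + dist x u))
    (x₀ : X) (y₀ : Y) (hx₀ : x₀ ≤ F x₀ y₀) (hy₀ : G y₀ x₀ ≤ y₀) :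
    ∃ (x : X) (y : Y), F x y = x ∧ G y x = y := by
  -- iterated sequence
  set p : ℕ → X × Y := fun n => Nat.rec (x₀, y₀)
    (fun _ q => (F q.1 q.2, G q.2 q.1)) n with hp
  set x : ℕ → X := fun n => (p n).1 with hx
  set y : ℕ → Y := fun n => (p n).2 with hy
  have hxs : ∀ n, x (n+1) = F (x n) (y n) := fun n => rfl
  have hys : ∀ n, y (n+1) = G (y n) (x n) := fun n => rfl
  have step : ∀ n, x n ≤ x (n+1) ∧ y (n+1) ≤ y n := by
    intro n
    induction n with
    | zero => exact ⟨hx₀, hy₀⟩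
    | succ n ih =>
      constructor
      · show F (x n) (y n) ≤ F (x (n+1)) (y (n+1))
        calc F (x n) (y n) ≤ F (x (n+1)) (y n) := hFmono _ ih.1
          _ ≤ F (x (n+1)) (y (n+1)) := hFanti _ ih.2
      · show G (y (n+1)) (x (n+1)) ≤ G (y n) (x n)
        calc G (y (n+1)) (x (n+1)) ≤ G (y n) (x (n+1)) := hGmono _ ih.2
          _ ≤ G (y n) (x n) := hGanti _ ih.1
  have hxmono : Monotone x := monotone_nat_of_le_succ fun n => (step n).1
  have hyanti : Antitone y := antitone_nat_of_succ_le fun n => (step n).2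
  set m : ℝ := max k l with hm
  have hm0 : 0 ≤ m := le_trans hk0 (le_max_left _ _)
  have hm1 : m < 1 := max_lt hk1 hl1
  set D : ℝ := dist (x 1) (x 0) + dist (y 1) (y 0) with hD
  have hD0 : 0 ≤ D := add_nonneg dist_nonneg dist_nonneg
  have hcontr : ∀ n, dist (x (n+1)) (x n) + dist (y (n+1)) (y n) ≤ m ^ n * D := by
    intro n
    induction n with
    | zero => simpa [hD] using le_refl D
    | succ n ih =>
      have h1 : dist (x (n+2)) (x (n+1)) ≤
          k / 2 * (dist (x (n+1)) (x n) + dist (y (n+1)) (y n)) := by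
        show dist (F (x (n+1)) (y (n+1))) (F (x n) (y n)) ≤
          k / 2 * (dist (x (n+1)) (x n) + dist (y (n+1)) (y n))
        exact hF _ _ _ _ (step n).1 (step n).2
      have h2 : dist (y (n+2)) (y (n+1)) ≤
          l / 2 * (dist (y (n+1)) (y n) + dist (x (n+1)) (x n)) := by
        show dist (G (y (n+1)) (x (n+1))) (G (y n) (x n)) ≤
          l / 2 * (dist (y (n+1)) (y n) + dist (x (n+1)) (x n))
        rw [dist_comm, dist_comm (y (n+1)) (y n), dist_comm (x (n+1)) (x n)]
        exact hG _ _ _ _ (step n).1 (step n).2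
      have hsum : dist (x (n+2)) (x (n+1)) + dist (y (n+2)) (y (n+1)) ≤
          m * (dist (x (n+1)) (x n) + dist (y (n+1)) (y n)) := by
        have hk : k ≤ m := le_max_left _ _
        have hl : l ≤ m := le_max_right _ _
        have hdx : (0:ℝ) ≤ dist (x (n+1)) (x n) := dist_nonneg
        have hdy : (0:ℝ) ≤ dist (y (n+1)) (y n) := dist_nonneg
        nlinarith [h1, h2]
      calc dist (x (n+2)) (x (n+1)) + dist (y (n+2)) (y (n+1))
          ≤ m * (dist (x (n+1)) (x n) + dist (y (n+1)) (y n)) := hsum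
        _ ≤ m * (m ^ n * D) := by
            exact mul_le_mul_of_nonneg_left ih hm0
        _ = m ^ (n+1) * D := by ring
  have hxd : ∀ n, dist (x n) (x (n+1)) ≤ D * m ^ n := by
    intro n
    rw [dist_comm, mul_comm]
    calc dist (x (n+1)) (x n)
        ≤ dist (x (n+1)) (x n) + dist (y (n+1)) (y n) :=
          le_add_of_nonneg_right dist_nonneg
      _ ≤ m ^ n * D := hcontr n
  have hyd : ∀ n, dist (y n) (y (n+1)) ≤ D * m ^ n := by
    intro n
    rw [dist_comm, mul_comm]
    calc dist (y (n+1)) (y n)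
        ≤ dist (x (n+1)) (x n) + dist (y (n+1)) (y n) :=
          le_add_of_nonneg_left dist_nonneg
      _ ≤ m ^ n * D := hcontr n
  have hxc : CauchySeq x := cauchySeq_of_le_geometric m D hm1 hxd
  have hyc : CauchySeq y := cauchySeq_of_le_geometric m D hm1 hyd
  obtain ⟨a, ha⟩ := cauchySeq_tendsto_of_complete hxc
  obtain ⟨b, hb⟩ := cauchySeq_tendsto_of_complete hyc
  have hxa : ∀ n, x n ≤ a := hX x a hxmono ha
  have hyb : ∀ n, b ≤ y n := hY y b hyanti hb
  have hda : Filter.Tendsto (fun n => dist (x n) a) Filter.atTop (nhds 0) := by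
    simpa using ha.dist (tendsto_const_nhds (x := a))
  have hdb : Filter.Tendsto (fun n => dist (y n) b) Filter.atTop (nhds 0) := by
    simpa using hb.dist (tendsto_const_nhds (x := b))
  refine ⟨a, b, ?_, ?_⟩
  · have h1 : Filter.Tendsto (fun n => dist (F a b) (x (n+1))) Filter.atTop
        (nhds (dist (F a b) a)) := by
      exact (tendsto_const_nhds).dist (ha.comp (Filter.tendsto_add_atTop_nat 1))
    have h2 : Filter.Tendsto (fun n => k / 2 * (dist a (x n) + dist b (y n)))
        Filter.atTop (nhds 0) := by
      have : Filter.Tendsto (fun n => k / 2 * (dist a (x n) + dist b (y n)))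
          Filter.atTop (nhds (k / 2 * (0 + 0))) := by
        apply Filter.Tendsto.const_mul
        apply Filter.Tendsto.add
        · simpa [dist_comm] using hda
        · simpa [dist_comm] using hdb
      simpa using this
    have hle : ∀ n, dist (F a b) (x (n+1)) ≤ k / 2 * (dist a (x n) + dist b (y n)) := by
      intro n
      rw [hxs]
      exact hF a (x n) b (y n) (hxa n) (hyb n)
    have : dist (F a b) a ≤ 0 :=
      le_of_tendsto_of_tendsto h1 h2 (Filter.Eventually.of_forall hle)
    have := le_antisymm this dist_nonneg
    exact dist_eq_zero.mp this
  · have h1 : Filter.Tendsto (fun n => dist (G b a) (y (n+1))) Filter.atTop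
        (nhds (dist (G b a) b)) := by
      exact (tendsto_const_nhds).dist (hb.comp (Filter.tendsto_add_atTop_nat 1))
    have h2 : Filter.Tendsto (fun n => l / 2 * (dist b (y n) + dist a (x n)))
        Filter.atTop (nhds 0) := by
      have : Filter.Tendsto (fun n => l / 2 * (dist b (y n) + dist a (x n)))
          Filter.atTop (nhds (l / 2 * (0 + 0))) := by
        apply Filter.Tendsto.const_mul
        apply Filter.Tendsto.add
        · simpa [dist_comm] using hdb
        · simpa [dist_comm] using hda
      simpa using this
    have hle : ∀ n, dist (G b a) (y (n+1)) ≤ l / 2 * (dist b (y n) + dist a (x n)) := by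
      intro n
      rw [hys, dist_comm, dist_comm b (y n), dist_comm a (x n)]
      exact hG (x n) a (y n) b (hxa n) (hyb n)
    have : dist (G b a) b ≤ 0 :=
      le_of_tendsto_of_tendsto h1 h2 (Filter.Eventually.of_forall hle)
    have := le_antisymm this dist_nonneg
    exact dist_eq_zero.mp this
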